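/- Consider the objective F(θ_1,...,θ_M) = |Σ_{m=1}^M h_m* e^{iθ_m} + d|² for fixed h_m, d ∈ ℂ. If θ is a local maximizer of F, then for every m with h_m* \overline{(Σ_{m'≠m} h_{m'}* e^{iθ_{m'}} + d)} ≠ 0, the phase satisfies θ_m = −arg( h_m* · \overline{ Σ_{m'≠m} h_{m'}* e^{iθ_{m'}} + d } ) (mod 2π). -/

import Mathlib

open Complex Real Finset

lemma cos_isLocalMax {x : ℝ} (hx : IsLocalMax Real.cos x) : ∃ k : ℤ, x = 2*π*k := by
  have hd : deriv Real.cos x = 0 := hx.deriv_eq_zero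
  rw [Real.deriv_cos, neg_eq_zero] at hd
  obtain ⟨n, hn⟩ := Real.sin_eq_zero_iff.mp hd
  rcases Int.even_or_odd n with ⟨k, hk⟩ | ⟨k, hk⟩
  · exact ⟨k, by rw [← hn, hk]; push_cast; ring⟩
  · exfalso
    have hcx : Real.cos x = -1 := by
      rw [← hn, hk]; push_cast
      rw [show ((2:ℝ)*k+1)*π = π + k*(2*π) by ring, Real.cos_add_int_mul_two_pi, Real.cos_pi]
    obtain ⟨ε, hε, hmax⟩ := Metric.eventually_nhds_iff.mp hx
    set δ := min (ε/2) (π/2) with hδ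
    have hδ0 : 0 < δ := lt_min (by linarith) (by positivity)
    have h1 : Real.cos (x + δ) ≤ Real.cos x := hmax (by
      simp [Real.dist_eq, abs_of_pos hδ0]
      calc δ ≤ ε/2 := min_le_left _ _
        _ < ε := by linarith)
    have h2 : Real.cos (x + δ) = -Real.cos δ := by
      rw [Real.cos_add, hcx, hd]; ring
    have hpi := Real.pi_pos
    have h3 : Real.cos δ < 1 := by
      refine lt_of_le_of_ne (Real.cos_le_one δ) (fun he => hδ0.ne' ?_)
      exact (Real.cos_eq_one_iff_of_lt_of_lt (by nlinarith [min_le_right (ε/2) (π/2)])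
        (by nlinarith [min_le_right (ε/2) (π/2)])).mp he
    rw [h2, hcx] at h1
    linarith

/-- First-order optimality: at a local maximizer of
`F(θ) = |Σ_m h_m* e^{iθ_m} + d|²`, every coordinate phase is aligned:
`θ_m ≡ −arg(h_m* · conj(Σ_{m'≠m} h_{m'}* e^{iθ_{m'}} + d)) (mod 2π)`. -/
theorem stmt8 (M : ℕ) (h : Fin M → ℂ) (d : ℂ) (θ : Fin M → ℝ)
    (hloc : IsLocalMax
      (fun t : Fin M → ℝ =>
        (‖∑ m, (starRingEnd ℂ) (h m) * Complex.exp (t m * Complex.I) + d‖) ^ 2)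
      θ) :
    ∀ m : Fin M,
      (starRingEnd ℂ) (h m) *
          (starRingEnd ℂ)
            (∑ m' ∈ Finset.univ.erase m,
                (starRingEnd ℂ) (h m') * Complex.exp (θ m' * Complex.I) + d) ≠ 0 →
      ∃ k : ℤ,
        θ m = -Complex.arg ((starRingEnd ℂ) (h m) *
            (starRingEnd ℂ)
              (∑ m' ∈ Finset.univ.erase m,
                  (starRingEnd ℂ) (h m') * Complex.exp (θ m' * Complex.I) + d)) +
          2 * π * k := by
  intro m hm
  set S : ℂ := ∑ m' ∈ Finset.univ.erase m,
      (starRingEnd ℂ) (h m') * Complex.exp (θ m' * Complex.I) + d with hS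
  set z : ℂ := (starRingEnd ℂ) (h m) * (starRingEnd ℂ) S with hz
  -- the one-variable restriction
  have hupd : Continuous (fun t : ℝ => Function.update θ m t) :=
    continuous_const.update m continuous_id
  have htend : Filter.Tendsto (fun t : ℝ => Function.update θ m t) (nhds (θ m)) (nhds θ) := by
    have := hupd.tendsto (θ m)
    rwa [Function.update_eq_self] at this
  have hloc1 : IsLocalMax
      (fun t : ℝ =>
        (‖∑ m', (starRingEnd ℂ) (h m') *
          Complex.exp ((Function.update θ m t m') * Complex.I) + d‖) ^ 2) (θ m) := by
    have h0 := htend.eventually hloc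
    filter_upwards [h0] with t ht
    simpa [Function.update_eq_self] using ht
  -- rewrite the restriction as c + 2|z| cos (arg z + t)
  have hkey : ∀ t : ℝ,
      (‖∑ m', (starRingEnd ℂ) (h m') *
          Complex.exp ((Function.update θ m t m') * Complex.I) + d‖) ^ 2
      = Complex.normSq ((starRingEnd ℂ) (h m)) + Complex.normSq S
        + 2 * (‖z‖ * Real.cos (z.arg + t)) := by
    intro t
    have hsum : (∑ m', (starRingEnd ℂ) (h m') *
        Complex.exp ((Function.update θ m t m') * Complex.I) + d)
        = (starRingEnd ℂ) (h m) * Complex.exp (t * Complex.I) + S := by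
      rw [← Finset.add_sum_erase Finset.univ _ (Finset.mem_univ m), Function.update_self, hS]
      have hB : ∑ x ∈ Finset.univ.erase m, (starRingEnd ℂ) (h x) *
            Complex.exp ((Function.update θ m t x) * Complex.I)
          = ∑ x ∈ Finset.univ.erase m, (starRingEnd ℂ) (h x) *
            Complex.exp ((θ x) * Complex.I) :=
        Finset.sum_congr rfl fun x hx => by
          rw [Function.update_of_ne (Finset.ne_of_mem_erase hx)]
      rw [hB]; ring
    rw [hsum, Complex.sq_norm, Complex.normSq_add, Complex.normSq_mul,
      ← Complex.sq_norm (Complex.exp _), Complex.norm_exp_ofReal_mul_I]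
    have hre : ((starRingEnd ℂ) (h m) * Complex.exp (t * Complex.I) * (starRingEnd ℂ) S).re
        = ‖z‖ * Real.cos (z.arg + t) := by
      have : (starRingEnd ℂ) (h m) * Complex.exp (t * Complex.I) * (starRingEnd ℂ) S
          = z * Complex.exp (t * Complex.I) := by rw [hz]; ring
      rw [this]
      conv_lhs => rw [← Complex.norm_mul_exp_arg_mul_I z]
      rw [mul_assoc, ← Complex.exp_add,
        show (↑z.arg * Complex.I + ↑t * Complex.I) = ((z.arg + t : ℝ) : ℂ) * Complex.I by
          push_cast; ring,
        Complex.re_ofReal_mul, Complex.exp_ofReal_mul_I_re]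
    rw [hre]; ring
  -- transfer local max to cos
  have habs : 0 < ‖z‖ := norm_pos_iff.mpr hm
  have hloc2 : IsLocalMax (fun t : ℝ => Real.cos (z.arg + t)) (θ m) := by
    have h1 : ∀ᶠ t in nhds (θ m),
        (‖z‖ * Real.cos (z.arg + t)) ≤ (‖z‖ * Real.cos (z.arg + θ m)) := by
      filter_upwards [hloc1] with t ht
      rw [hkey t, hkey (θ m)] at ht
      linarith
    filter_upwards [h1] with t ht
    exact le_of_mul_le_mul_left ht habs
  have hloc3 : IsLocalMax Real.cos (z.arg + θ m) := by
    have htr : Filter.Tendsto (fun s : ℝ => s - z.arg) (nhds (z.arg + θ m)) (nhds (θ m)) := by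
      have h2 : Filter.Tendsto (fun s : ℝ => s - z.arg) (nhds (z.arg + θ m))
          (nhds (z.arg + θ m - z.arg)) := (Continuous.tendsto (by continuity) _)
      rwa [show z.arg + θ m - z.arg = θ m by ring] at h2
    have h0 := htr.eventually hloc2
    filter_upwards [h0] with s hs
    rwa [show z.arg + (s - z.arg) = s by ring] at hs
  obtain ⟨k, hk⟩ := cos_isLocalMax hloc3
  exact ⟨k, by linarith⟩
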